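/- Let α, β ∈ ℂ with |β| < |α|, let a ≤ b be real numbers, and let μ : ℝ → ℂ be continuously differentiable on [a, b] with |μ(t)| < 1 for all t ∈ [a, b]. Set ν(t) = T(μ(t)). Then exp(∫ₐᵇ (conj(ν(t))·ν′(t) − ν(t)·conj(ν′(t)))/(1 − |ν(t)|²) dt) = (conj(α + μ(a)β)/(α + μ(a)β)) · ((α + μ(b)β)/conj(α + μ(b)β)) · exp(∫ₐᵇ (conj(μ(t))·μ′(t) − μ(t)·conj(μ′(t)))/(1 − |μ(t)|²) dt). (This is the transformation law of the phase factor exp(∫₁² (μ̄ dμ − μ dμ̄)/(1 − |μ|²)) appearing in the bracket {μ(1), μ̄(2)}∘ under a change of the transverse complex coordinate with constant coefficients along a generator, establishing the coordinate invariance of the bracket formula.) -/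

import Mathlib

open Set intervalIntegral Complex

local notation "conj'" => starRingEnd ℂ

lemma exp_integral_deriv_div (a b : ℝ) (hab : a ≤ b) (f f' : ℝ → ℂ)
    (hd : ∀ t ∈ Set.Icc a b, HasDerivAt f (f' t) t)
    (hc : ContinuousOn f' (Set.Icc a b))
    (hne : ∀ t ∈ Set.Icc a b, f t ≠ 0) :
    Complex.exp (∫ t in a..b, f' t / f t) = f b / f a := by
  have hfc : ContinuousOn f (Set.Icc a b) := fun t ht =>
    (hd t ht).continuousAt.continuousWithinAt
  have hgc : ContinuousOn (fun t => f' t / f t) (Set.Icc a b) := hc.div hfc hne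
  set G : ℝ → ℂ := Set.IccExtend hab ((Set.Icc a b).restrict fun t => f' t / f t) with hG
  have hGc : Continuous G := hgc.restrict.Icc_extend'
  have hGeq : ∀ t ∈ Set.Icc a b, G t = f' t / f t := fun t ht => by
    rw [hG, Set.IccExtend_of_mem hab _ ht]; rfl
  set E : ℝ → ℂ := fun t => ∫ s in a..t, G s with hE
  have hEd : ∀ t, HasDerivAt E (G t) t := fun t =>
    (hGc.integral_hasStrictDerivAt a t).hasDerivAt
  set F : ℝ → ℂ := fun t => Complex.exp (-E t) * f t with hF
  have hFd : ∀ t ∈ Set.Icc a b, HasDerivAt F 0 t := by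
    intro t ht
    have h1 : HasDerivAt (fun s => Complex.exp (-E s)) (Complex.exp (-E t) * (-G t)) t :=
      (hEd t).neg.cexp
    have h2 := h1.mul (hd t ht)
    have h3 : Complex.exp (-E t) * -G t * f t + Complex.exp (-E t) * f' t = 0 := by
      rw [hGeq t ht]; field_simp [hne t ht]; ring
    rw [h3] at h2; exact h2
  have hFc : ContinuousOn F (Set.Icc a b) := fun t ht =>
    (hFd t ht).continuousAt.continuousWithinAt
  have hconst := constant_of_has_deriv_right_zero hFc
    (fun x hx => (hFd x (Set.Ico_subset_Icc_self hx)).hasDerivWithinAt) b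
    (Set.right_mem_Icc.2 hab)
  have hEa : E a = 0 := intervalIntegral.integral_same
  have hEb : E b = ∫ t in a..b, f' t / f t := by
    apply intervalIntegral.integral_congr
    intro t ht
    exact hGeq t ((Set.uIcc_of_le hab ▸ ht))
  rw [hF] at hconst
  simp only [hEa, neg_zero, Complex.exp_zero, one_mul] at hconst
  rw [← hEb, eq_div_iff (hne a ⟨le_refl a, hab⟩), ← hconst]
  rw [← mul_assoc, ← Complex.exp_add]
  simp

set_option maxHeartbeats 1000000 in
lemma mobius_alg (A A' B B' m n m' n' : ℂ)
    (hD : A + m * B ≠ 0) (hD' : A' + n * B' ≠ 0)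
    (hmn : 1 - m * n ≠ 0) (hK : A * A' - B * B' ≠ 0) :
    (((B + n * A) / (A' + n * B')) *
        ((m' * A' * (A + m * B) - (B' + m * A') * (m' * B)) / (A + m * B) ^ 2) -
      ((B' + m * A') / (A + m * B)) *
        ((n' * A * (A' + n * B') - (B + n * A) * (n' * B')) / (A' + n * B') ^ 2)) /
      (1 - ((B' + m * A') / (A + m * B)) * ((B + n * A) / (A' + n * B')))
    = (n * m' - m * n') / (1 - m * n) +
      (m' * B / (A + m * B) - n' * B' / (A' + n * B')) := by
  set D := A + m * B with hDdef
  set D' := A' + n * B' with hD'def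
  set N := B' + m * A' with hNdef
  set N' := B + n * A with hN'def
  have e1 : m' * A' * D - N * (m' * B) = m' * (A * A' - B * B') := by
    rw [hDdef, hNdef]; ring
  have e2 : n' * A * D' - N' * (n' * B') = n' * (A * A' - B * B') := by
    rw [hD'def, hN'def]; ring
  have h1 : 1 - N / D * (N' / D') = (A * A' - B * B') * (1 - m * n) / (D * D') := by
    field_simp
    rw [hDdef, hD'def, hNdef, hN'def]; ring
  have h2 : N' / D' * (m' * (A * A' - B * B') / D ^ 2) -
      N / D * (n' * (A * A' - B * B') / D' ^ 2) =
      (A * A' - B * B') * (N' * D' * m' - N * D * n') / (D ^ 2 * D' ^ 2) := by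
    field_simp
  have h3 : (A * A' - B * B') * (N' * D' * m' - N * D * n') / (D ^ 2 * D' ^ 2) /
      ((A * A' - B * B') * (1 - m * n) / (D * D')) =
      (N' * D' * m' - N * D * n') / (D * D' * (1 - m * n)) := by
    rw [div_div_div_eq, div_eq_div_iff
      (mul_ne_zero (mul_ne_zero (pow_ne_zero 2 hD) (pow_ne_zero 2 hD')) (mul_ne_zero hK hmn))
      (mul_ne_zero (mul_ne_zero hD hD') hmn)]
    ring
  have h4 : (N' * D' * m' - N * D * n') / (D * D' * (1 - m * n)) =
      (n * m' - m * n') / (1 - m * n) + (m' * B / D - n' * B' / D') := by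
    rw [div_sub_div _ _ hD hD', div_add_div _ _ hmn (mul_ne_zero hD hD'), div_eq_div_iff (mul_ne_zero (mul_ne_zero hD hD') hmn) (mul_ne_zero hmn (mul_ne_zero hD hD'))]
    rw [hDdef, hD'def, hNdef, hN'def]
    ring
  rw [e1, e2, h1, h2, h3, h4]


/-- The Möbius-type transformation of the conformal 2-metric parameter `μ` induced by
the change of transverse complex coordinate `z = α·z′ + conj(β)·conj(z′)`:
`T(μ) = (conj β + μ·conj α)/(α + μ·β)`. -/
noncomputable def mobiusT (α β μ : ℂ) : ℂ :=
  ((starRingEnd ℂ) β + μ * (starRingEnd ℂ) α) / (α + μ * β)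

set_option maxHeartbeats 1000000 in
/-- Transformation law of the phase factor `exp(∫ (μ̄ dμ − μ dμ̄)/(1 − |μ|²))` along a
generator under the change of transverse complex coordinate encoded by `T`: if
`μ : ℝ → ℂ` is continuously differentiable on `[a, b]` with `|μ(t)| < 1` there, and
`ν(t) = T(μ(t))` with derivative `ν′`, then
`exp(∫ₐᵇ (ν̄ν′ − νν̄′)/(1 − |ν|²)) =
  (conj(α + μ(a)β)/(α + μ(a)β)) · ((α + μ(b)β)/conj(α + μ(b)β)) ·
    exp(∫ₐᵇ (μ̄μ′ − μμ̄′)/(1 − |μ|²))`. -/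
theorem mobiusT_phase_transformation (α β : ℂ)
    (hβα : ‖β‖ < ‖α‖)
    (a b : ℝ) (hab : a ≤ b) (μ μ' : ℝ → ℂ)
    (hμderiv : ∀ t ∈ Set.Icc a b, HasDerivAt μ (μ' t) t)
    (hμcont : ContinuousOn μ' (Set.Icc a b))
    (hμlt : ∀ t ∈ Set.Icc a b, ‖μ t‖ < 1)
    (ν ν' : ℝ → ℂ)
    (hν : ∀ t, ν t = mobiusT α β (μ t))
    (hνderiv : ∀ t ∈ Set.Icc a b, HasDerivAt ν (ν' t) t) :
    Complex.exp (∫ t in a..b,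
        ((starRingEnd ℂ) (ν t) * ν' t - ν t * (starRingEnd ℂ) (ν' t)) /
          (1 - (‖ν t‖ : ℂ) ^ 2)) =
      ((starRingEnd ℂ) (α + μ a * β) / (α + μ a * β)) *
        ((α + μ b * β) / (starRingEnd ℂ) (α + μ b * β)) *
        Complex.exp (∫ t in a..b,
          ((starRingEnd ℂ) (μ t) * μ' t - μ t * (starRingEnd ℂ) (μ' t)) /
            (1 - (‖μ t‖ : ℂ) ^ 2)) := by
  have habs : ∀ z : ℂ, ((‖z‖ : ℂ)) ^ 2 = z * conj' z := fun z => by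
    rw [← Complex.ofReal_pow, Complex.sq_norm, Complex.mul_conj]
  -- nonvanishing of the denominator
  have hD0 : ∀ t ∈ Set.Icc a b, α + μ t * β ≠ 0 := by
    intro t ht h
    have h1 : ‖μ t * β‖ < ‖α‖ := by
      rw [norm_mul]
      calc ‖μ t‖ * ‖β‖ ≤ 1 * ‖β‖ :=
            mul_le_mul_of_nonneg_right (hμlt t ht).le (norm_nonneg β)
        _ = ‖β‖ := one_mul _
        _ < ‖α‖ := hβα
    have h2 : α = -(μ t * β) := by linear_combination h
    rw [h2, norm_neg] at h1
    exact lt_irrefl _ h1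
  have hD0c : ∀ t ∈ Set.Icc a b, conj' α + conj' (μ t) * conj' β ≠ 0 := by
    intro t ht h
    apply hD0 t ht
    have : conj' (α + μ t * β) = 0 := by rw [map_add, map_mul]; exact h
    simpa using congrArg conj' this
  have hK : α * conj' α - β * conj' β ≠ 0 := by
    rw [Complex.mul_conj, Complex.mul_conj, sub_ne_zero]
    have : Complex.normSq β < Complex.normSq α := by
      rw [← Complex.sq_norm, ← Complex.sq_norm]
      exact pow_lt_pow_left₀ hβα (norm_nonneg β) two_ne_zero
    exact_mod_cast this.ne'
  have hmn : ∀ t ∈ Set.Icc a b, 1 - μ t * conj' (μ t) ≠ 0 := by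
    intro t ht
    rw [Complex.mul_conj, sub_ne_zero]
    have : Complex.normSq (μ t) < 1 := by
      rw [← Complex.sq_norm]
      exact pow_lt_one₀ (norm_nonneg _) (hμlt t ht) two_ne_zero
    exact_mod_cast this.ne'
  have hZμ : ∀ t ∈ Set.Icc a b, (1 - (‖μ t‖ : ℂ) ^ 2) ≠ 0 := fun t ht => by
    rw [habs]; exact hmn t ht
  -- formula for ν'
  have hν'eq : ∀ t ∈ Set.Icc a b, ν' t =
      (μ' t * conj' α * (α + μ t * β) - (conj' β + μ t * conj' α) * (μ' t * β)) /
        (α + μ t * β) ^ 2 := by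
    intro t ht
    have hnum : HasDerivAt (fun s => conj' β + μ s * conj' α) (μ' t * conj' α) t :=
      ((hμderiv t ht).mul_const _).const_add _
    have hden : HasDerivAt (fun s => α + μ s * β) (μ' t * β) t :=
      ((hμderiv t ht).mul_const _).const_add _
    have hq : HasDerivAt (fun s => (conj' β + μ s * conj' α) / (α + μ s * β)) _ t :=
      hnum.div hden (hD0 t ht)
    have hfun : (fun s => (conj' β + μ s * conj' α) / (α + μ s * β)) = ν := by
      funext s; rw [hν s, mobiusT]
    rw [hfun] at hq
    exact (hνderiv t ht).unique hq
  -- key pointwise identity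
  have key : ∀ t ∈ Set.Icc a b,
      (conj' (ν t) * ν' t - ν t * conj' (ν' t)) / (1 - (‖ν t‖ : ℂ) ^ 2) =
      (conj' (μ t) * μ' t - μ t * conj' (μ' t)) / (1 - (‖μ t‖ : ℂ) ^ 2) +
        (μ' t * β / (α + μ t * β) - conj' (μ' t * β) / conj' (α + μ t * β)) := by
    intro t ht
    rw [habs, habs, hν t, hν'eq t ht, mobiusT]
    simp only [map_div₀, map_add, map_mul, map_sub, map_pow, Complex.conj_conj]
    exact mobius_alg α (conj' α) β (conj' β) (μ t) (conj' (μ t)) (μ' t) (conj' (μ' t))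
      (hD0 t ht) (hD0c t ht) (hmn t ht) hK
  -- continuity / integrability
  have hμc : ContinuousOn μ (Set.Icc a b) := fun t ht =>
    (hμderiv t ht).continuousAt.continuousWithinAt
  have hDc : ContinuousOn (fun t => α + μ t * β) (Set.Icc a b) :=
    continuousOn_const.add (hμc.mul continuousOn_const)
  have hInt : ∀ F : ℝ → ℂ, ContinuousOn F (Set.Icc a b) →
      IntervalIntegrable F MeasureTheory.volume a b := fun F hF =>
    ContinuousOn.intervalIntegrable (by rwa [Set.uIcc_of_le hab])
  have hconjc : Continuous (conj' : ℂ → ℂ) := Complex.continuous_conj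
  have hiμ : IntervalIntegrable
      (fun t => (conj' (μ t) * μ' t - μ t * conj' (μ' t)) / (1 - (‖μ t‖ : ℂ) ^ 2))
      MeasureTheory.volume a b := by
    apply hInt
    apply ContinuousOn.div
    · exact ((hconjc.comp_continuousOn hμc).mul hμcont).sub
        (hμc.mul (hconjc.comp_continuousOn hμcont))
    · exact continuousOn_const.sub
        ((Complex.continuous_ofReal.comp_continuousOn
          (continuous_norm.comp_continuousOn hμc)).pow 2)
    · exact hZμ
  have hip : IntervalIntegrable (fun t => μ' t * β / (α + μ t * β))
      MeasureTheory.volume a b := by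
    apply hInt
    exact (hμcont.mul continuousOn_const).div hDc hD0
  have hiq : IntervalIntegrable (fun t => conj' (μ' t * β) / conj' (α + μ t * β))
      MeasureTheory.volume a b := by
    apply hInt
    apply ContinuousOn.div
    · exact hconjc.comp_continuousOn (hμcont.mul continuousOn_const)
    · exact hconjc.comp_continuousOn hDc
    · intro t ht
      simpa only [map_add, map_mul] using hD0c t ht
  -- the two exponential factors
  have hpexp : Complex.exp (∫ t in a..b, μ' t * β / (α + μ t * β)) =
      (α + μ b * β) / (α + μ a * β) := by
    exact exp_integral_deriv_div a b hab (fun t => α + μ t * β) (fun t => μ' t * β)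
      (fun t ht => ((hμderiv t ht).mul_const _).const_add _)
      (hμcont.mul continuousOn_const) hD0
  have hqexp : Complex.exp (∫ t in a..b, conj' (μ' t * β) / conj' (α + μ t * β)) =
      conj' (α + μ b * β) / conj' (α + μ a * β) := by
    apply exp_integral_deriv_div a b hab (fun t => conj' (α + μ t * β))
      (fun t => conj' (μ' t * β))
    · intro t ht
      simpa only [starRingEnd_apply] using (((hμderiv t ht).mul_const β).const_add α).star
    · exact hconjc.comp_continuousOn (hμcont.mul continuousOn_const)
    · intro t ht h
      exact hD0 t ht (by simpa using congrArg conj' h)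
  -- assemble
  have hEq : Set.EqOn
      (fun t => (conj' (ν t) * ν' t - ν t * conj' (ν' t)) / (1 - (‖ν t‖ : ℂ) ^ 2))
      (fun t => (conj' (μ t) * μ' t - μ t * conj' (μ' t)) / (1 - (‖μ t‖ : ℂ) ^ 2) +
        (μ' t * β / (α + μ t * β) - conj' (μ' t * β) / conj' (α + μ t * β)))
      (Set.uIcc a b) := fun t ht => key t (by rwa [Set.uIcc_of_le hab] at ht)
  rw [intervalIntegral.integral_congr hEq,
    intervalIntegral.integral_add hiμ (hip.sub hiq),
    intervalIntegral.integral_sub hip hiq,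
    Complex.exp_add, Complex.exp_sub, hpexp, hqexp]
  have ha0 := hD0 a (Set.left_mem_Icc.mpr hab)
  have hb0 := hD0 b (Set.right_mem_Icc.mpr hab)
  have ha0' : conj' (α + μ a * β) ≠ 0 := fun h => ha0 (by simpa using congrArg conj' h)
  have hb0' : conj' (α + μ b * β) ≠ 0 := fun h => hb0 (by simpa using congrArg conj' h)
  field_simp
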